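/- Let p be a prime and 1 ≤ l ≤ p. Then (l-1)! · (K(p) - K(p-l)) ≡ -S(l-1) (mod p). -/

import Mathlib

/-- Kurepa's left factorial. -/
def K (n : ℕ) : ℕ := ∑ k ∈ Finset.range n, k.factorial

lemma lemA (p : ℕ) [Fact p.Prime] : ∀ j, j + 1 ≤ p →
    ((p - (j+1)).factorial : ZMod p) * ((-1)^j * (j.factorial : ZMod p)) = -1 := by
  intro j
  induction j with
  | zero => intro _; simpa using ZMod.wilsons_lemma (p := p)
  | succ m ih =>
    intro h
    have h1 : m + 1 ≤ p := by omega
    have e1 : p - (m+1) = (p - (m+2)) + 1 := by omega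
    have e2 : ((p - (m+2) + 1 : ℕ) : ZMod p) = -((m+1 : ℕ) : ZMod p) := by
      have h3 : ((p - (m+2) + 1 : ℕ) : ZMod p) + ((m+1 : ℕ) : ZMod p) = ((p : ℕ) : ZMod p) := by
        rw [← Nat.cast_add]; congr 1; omega
      have h4 : ((p : ℕ) : ZMod p) = 0 := ZMod.natCast_self p
      linear_combination h3 + h4
    have key := ih h1
    rw [e1, Nat.factorial_succ] at key
    rw [Nat.factorial_succ]
    push_cast at key e2 ⊢
    rw [e2] at key
    linear_combination key

lemma lemB (p : ℕ) [Fact p.Prime] (j : ℕ) (h : j + 1 ≤ p) :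
    ((j.factorial : ZMod p)) * ((p - (j+1)).factorial : ZMod p) = (-1)^(j+1) := by
  have hA := lemA p j h
  have h2 : ((-1 : ZMod p))^j * (-1 : ZMod p)^j = 1 := by
    rw [← pow_add]; exact Even.neg_one_pow ⟨j, rfl⟩
  calc ((j.factorial : ZMod p)) * ((p - (j+1)).factorial : ZMod p)
      = ((-1:ZMod p)^j * (-1:ZMod p)^j) * (j.factorial * ((p - (j+1)).factorial : ZMod p)) := by
        rw [h2, one_mul]
    _ = (-1:ZMod p)^j * ((p - (j+1)).factorial * ((-1)^j * j.factorial)) := by ring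
    _ = (-1:ZMod p)^j * (-1) := by rw [hA]
    _ = (-1)^(j+1) := by rw [pow_succ]

lemma lemC (p : ℕ) [Fact p.Prime] : ∀ m, m + 1 ≤ p →
    ((m.factorial : ZMod p)) * ((K p : ZMod p) - (K (p - (m+1)) : ZMod p))
      = -(numDerangements m : ZMod p) := by
  intro m
  induction m with
  | zero =>
    intro h
    have e1 : p = (p - 1) + 1 := by omega
    have e2 : K p = K (p-1) + (p-1).factorial := by
      conv_lhs => rw [e1]
      simp [K, Finset.sum_range_succ]
    have w : (((p-1).factorial : ℕ) : ZMod p) = -1 := ZMod.wilsons_lemma (p := p)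
    rw [e2]
    push_cast
    rw [w]
    simp [numDerangements]
  | succ m ih =>
    intro h
    have h1 : m + 1 ≤ p := by omega
    have e1 : (K (p - (m+1)) : ZMod p)
        = (K (p - (m+2)) : ZMod p) + ((p - (m+2)).factorial : ZMod p) := by
      have hx : p - (m+1) = (p - (m+2)) + 1 := by omega
      have hK : K (p - (m+2) + 1) = K (p - (m+2)) + (p - (m+2)).factorial := by
        simp [K, Finset.sum_range_succ]
      rw [hx, hK]; push_cast; ring
    have key := ih h1
    rw [e1] at key
    have hb := lemB p (m+1) h
    rw [Nat.factorial_succ] at hb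
    have hd : ((numDerangements (m+1) : ℕ) : ZMod p)
        = (m+1) * (numDerangements m : ZMod p) - (-1)^m := by
      have hz := numDerangements_succ m
      calc ((numDerangements (m+1) : ℕ) : ZMod p)
          = (((numDerangements (m+1) : ℤ)) : ZMod p) := by push_cast; ring
        _ = _ := by rw [hz]; push_cast; ring
    rw [Nat.factorial_succ, hd]
    push_cast at key hb ⊢
    linear_combination (m+1 : ZMod p) * key + hb

theorem kurepa_diff_congr (p l : ℕ) (hp : p.Prime) (hl1 : 1 ≤ l) (hlp : l ≤ p) :
    ((l - 1).factorial : ℤ) * ((K p : ℤ) - K (p - l)) ≡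
      -(numDerangements (l - 1) : ℤ) [ZMOD p] := by
  haveI : Fact p.Prime := ⟨hp⟩
  obtain ⟨m, rfl⟩ : ∃ m, l = m + 1 := ⟨l - 1, by omega⟩
  rw [← ZMod.intCast_eq_intCast_iff]
  have := lemC p m hlp
  push_cast
  simpa using this
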